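/- Assume ε ∈ (0, r₀/2] and that the map u ↦ utΓ is injective on U_{2ε} = U_ε·U_ε. Then φ_ε ∈ L²(X, μ) and ∫_X φ_ε² dμ = 1/(m(U_ε)·V(Γ)). -/

import Mathlib

open MeasureTheory Set Pointwise

private lemma stmt4_aux {G : Type*} [Group G] [MeasurableSpace G] [MeasurableMul G]
    (m : Measure G) (hm : m.IsMulRightInvariant)
    (Λ : Subgroup G) [Countable Λ]
    (U D : Set G) (hUmeas : MeasurableSet U) (hDcnt : D.Countable)
    (hmU0 : m U ≠ 0) (hmUtop : m U ≠ ⊤)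
    (huniq : ∀ h γ₁ γ₂ : G, γ₁ ∈ D → γ₂ ∈ D → h * γ₁ ∈ U → h * γ₂ ∈ U → γ₁ = γ₂)
    (hDmul : ∀ γ' ∈ Λ, ∀ γ ∈ D, γ' * γ ∈ D)
    (b : G) (hbD : ∀ γ' : Λ, (γ' : G)⁻¹ * b ∈ D)
    (hDb : ∀ γ ∈ D, ∃ γ' : Λ, (γ' : G)⁻¹ * b = γ)
    (V : ℝ) (hV : 0 < V)
    (F' : Set G) (hF'meas : MeasurableSet F')
    (hF'fund : ∀ g : G, ∃! γ : Λ, g * (γ : G) ∈ F')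
    (μ : Measure (G ⧸ Λ)) [IsProbabilityMeasure μ]
    (hμ : ∀ A : Set (G ⧸ Λ), MeasurableSet A →
      μ A = m ((QuotientGroup.mk ⁻¹' A : Set G) ∩ F') / ENNReal.ofReal V) :
    MemLp (fun x : G ⧸ Λ =>
        ∑' γ : D, U.indicator (fun _ => ((m U).toReal)⁻¹) (Quotient.out x * (γ : G))) 2 μ ∧
    ∫ x, (∑' γ : D, U.indicator (fun _ => ((m U).toReal)⁻¹) (Quotient.out x * (γ : G))) ^ 2 ∂μ
      = ((m U).toReal * V)⁻¹ := by
  haveI := hm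
  set c : ℝ := ((m U).toReal)⁻¹ with hcdef
  have hTpos : 0 < (m U).toReal := ENNReal.toReal_pos hmU0 hmUtop
  -- the set `S` downstairs and its `Λ`-invariance
  set S : Set G := {g | ∃ γ ∈ D, g * γ ∈ U} with hSdef
  have hSinv : ∀ g : G, ∀ γ' ∈ Λ, g * γ' ∈ S ↔ g ∈ S := by
    intro g γ' hγ'
    constructor
    · rintro ⟨γ, hγ, hgu⟩
      exact ⟨γ' * γ, hDmul γ' hγ' γ hγ, by rwa [← mul_assoc]⟩
    · rintro ⟨γ, hγ, hgu⟩
      refine ⟨γ'⁻¹ * γ, hDmul γ'⁻¹ (inv_mem hγ') γ hγ, ?_⟩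
      have heq : g * γ' * (γ'⁻¹ * γ) = g * γ := by group
      rwa [heq]
  have hSmeas : MeasurableSet S := by
    have hrep : S = ⋃ γ ∈ D, (fun g => g * γ) ⁻¹' U := by
      ext g; simp [hSdef, mem_iUnion]
    rw [hrep]
    exact MeasurableSet.biUnion hDcnt fun γ _ => hUmeas.preimage (measurable_mul_const γ)
  -- the set `A` upstairs
  set A : Set (G ⧸ Λ) := QuotientGroup.mk '' S with hAdef
  have hpre : (QuotientGroup.mk ⁻¹' A : Set G) = S := by
    ext g
    constructor
    · rintro ⟨g', hg', hq⟩
      have hmem : g'⁻¹ * g ∈ Λ := QuotientGroup.eq.mp hq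
      have heq : g' * (g'⁻¹ * g) = g := by group
      exact heq ▸ ((hSinv g' _ hmem).mpr hg')
    · intro hg; exact ⟨g, hg, rfl⟩
  have hAmeas : MeasurableSet A := by
    rw [measurableSet_quotient]
    have h' : (Quotient.mk'' ⁻¹' A : Set G) = S := hpre
    rw [h']; exact hSmeas
  have houtS : ∀ x : G ⧸ Λ, Quotient.out x ∈ S ↔ x ∈ A := by
    intro x
    have hx : (QuotientGroup.mk (Quotient.out x) : G ⧸ Λ) = x := Quotient.out_eq x
    constructor
    · intro h; exact hx ▸ ⟨_, h, rfl⟩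
    · intro h
      have hmem : Quotient.out x ∈ (QuotientGroup.mk ⁻¹' A : Set G) := by
        rw [mem_preimage, hx]; exact h
      rwa [hpre] at hmem
  -- the function is the indicator of `A`
  have hfeq : ∀ x : G ⧸ Λ,
      (∑' γ : D, U.indicator (fun _ => c) (Quotient.out x * (γ : G)))
        = A.indicator (fun _ => c) x := by
    intro x
    by_cases hx : Quotient.out x ∈ S
    · obtain ⟨γ₀, hγ₀D, hγ₀U⟩ := hx
      rw [Set.indicator_of_mem ((houtS x).mp ⟨γ₀, hγ₀D, hγ₀U⟩)]
      rw [tsum_eq_single (⟨γ₀, hγ₀D⟩ : D)]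
      · exact Set.indicator_of_mem hγ₀U _
      · rintro ⟨γ, hγ⟩ hne
        apply Set.indicator_of_notMem
        intro hmem
        exact hne (Subtype.ext (huniq _ γ γ₀ hγ hγ₀D hmem hγ₀U))
    · rw [Set.indicator_of_notMem (fun h => hx ((houtS x).mpr h))]
      have hz : ∀ γ : D, U.indicator (fun _ => c) (Quotient.out x * (γ : G)) = 0 := by
        rintro ⟨γ, hγ⟩
        exact Set.indicator_of_notMem (fun hmem => hx ⟨γ, hγ, hmem⟩) _
      rw [tsum_congr hz, tsum_zero]
  have hfun : (fun x : G ⧸ Λ =>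
      ∑' γ : D, U.indicator (fun _ => c) (Quotient.out x * (γ : G)))
        = A.indicator (fun _ => c) := funext hfeq
  -- the measure of `A`
  have hμA : μ A = m U / ENNReal.ofReal V := by
    rw [hμ A hAmeas, hpre]
    congr 1
    -- unfolding: `m (S ∩ F') = m U`
    have hScover : S = ⋃ γ' : Λ,
        (fun g => g * (((γ' : G))⁻¹ * b)) ⁻¹' U := by
      ext g
      simp only [hSdef, mem_setOf_eq, mem_iUnion, mem_preimage]
      constructor
      · rintro ⟨γ, hγD, hgU⟩
        obtain ⟨γ', hγ'⟩ := hDb γ hγD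
        exact ⟨γ', by rw [hγ']; exact hgU⟩
      · rintro ⟨γ', hgU⟩
        exact ⟨_, hbD γ', hgU⟩
    have hCmeas : ∀ γ' : Λ, MeasurableSet
        ((fun g => g * (((γ' : G))⁻¹ * b)) ⁻¹' U ∩ F') :=
      fun γ' => (hUmeas.preimage (measurable_mul_const _)).inter hF'meas
    have hdisj : Pairwise (Function.onFun Disjoint fun γ' : Λ =>
        (fun g => g * (((γ' : G))⁻¹ * b)) ⁻¹' U ∩ F') := by
      intro γ₁ γ₂ hne
      refine Set.disjoint_left.mpr ?_
      rintro g ⟨hg₁, -⟩ ⟨hg₂, -⟩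
      apply hne
      have heq := huniq g _ _ (hbD γ₁) (hbD γ₂) hg₁ hg₂
      have heq' : ((γ₁ : G))⁻¹ = ((γ₂ : G))⁻¹ := mul_right_cancel heq
      exact Subtype.ext (inv_injective heq')
    have hdisj2 : Pairwise (Function.onFun Disjoint fun γ' : Λ =>
        U ∩ (fun u => u * (b⁻¹ * (γ' : G))) ⁻¹' F') := by
      intro γ₁ γ₂ hne
      refine Set.disjoint_left.mpr ?_
      rintro u ⟨huU, hu₁⟩ ⟨-, hu₂⟩
      apply hne
      have h₁ : u * b⁻¹ * (γ₁ : G) ∈ F' := by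
        have heq : u * b⁻¹ * (γ₁ : G) = u * (b⁻¹ * (γ₁ : G)) := by group
        rw [heq]; exact hu₁
      have h₂ : u * b⁻¹ * (γ₂ : G) ∈ F' := by
        have heq : u * b⁻¹ * (γ₂ : G) = u * (b⁻¹ * (γ₂ : G)) := by group
        rw [heq]; exact hu₂
      exact ExistsUnique.unique (hF'fund (u * b⁻¹)) h₁ h₂
    have hPmeas : ∀ γ' : Λ, MeasurableSet
        (U ∩ (fun u => u * (b⁻¹ * (γ' : G))) ⁻¹' F') :=
      fun γ' => hUmeas.inter (hF'meas.preimage (measurable_mul_const _))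
    have hcover : U ⊆ ⋃ γ' : Λ, (fun u => u * (b⁻¹ * (γ' : G))) ⁻¹' F' := by
      intro u hu
      obtain ⟨γ', hγ', -⟩ := hF'fund (u * b⁻¹)
      refine mem_iUnion.mpr ⟨γ', ?_⟩
      show u * (b⁻¹ * (γ' : G)) ∈ F'
      rw [← mul_assoc]; exact hγ'
    calc m (S ∩ F')
        = m (⋃ γ' : Λ, ((fun g => g * (((γ' : G))⁻¹ * b)) ⁻¹' U ∩ F')) := by
          rw [hScover, iUnion_inter]
      _ = ∑' γ' : Λ, m ((fun g => g * (((γ' : G))⁻¹ * b)) ⁻¹' U ∩ F') :=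
          measure_iUnion hdisj hCmeas
      _ = ∑' γ' : Λ, m (U ∩ (fun u => u * (b⁻¹ * (γ' : G))) ⁻¹' F') := by
          refine tsum_congr fun γ' => ?_
          have key : (fun g => g * (((γ' : G))⁻¹ * b)) ⁻¹' U ∩ F'
              = (fun g => g * (((γ' : G))⁻¹ * b)) ⁻¹'
                  (U ∩ (fun u => u * (b⁻¹ * (γ' : G))) ⁻¹' F') := by
            ext g
            simp only [mem_inter_iff, mem_preimage]
            have heq : g * (((γ' : G))⁻¹ * b) * (b⁻¹ * (γ' : G)) = g := by group
            rw [heq]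
          rw [key, measure_preimage_mul_right]
      _ = m (⋃ γ' : Λ, U ∩ (fun u => u * (b⁻¹ * (γ' : G))) ⁻¹' F') :=
          (measure_iUnion hdisj2 hPmeas).symm
      _ = m U := by
          rw [← inter_iUnion]
          exact congrArg m (inter_eq_self_of_subset_left hcover)
  -- put everything together
  constructor
  · rw [hfun]
    exact memLp_indicator_const 2 hAmeas c (Or.inr (measure_ne_top μ A))
  · have hsq : ∀ x : G ⧸ Λ,
        (A.indicator (fun _ => c) x) ^ 2 = A.indicator (fun _ => c ^ 2) x := by
      intro x; by_cases hx : x ∈ A <;> simp [hx]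
    calc ∫ x, (∑' γ : D, U.indicator (fun _ => c) (Quotient.out x * (γ : G))) ^ 2 ∂μ
        = ∫ x, A.indicator (fun _ => c ^ 2) x ∂μ := by
          simp_rw [hfeq, hsq]
      _ = (μ A).toReal • c ^ 2 := integral_indicator_const _ hAmeas
      _ = ((m U).toReal * V)⁻¹ := by
          rw [hμA, ENNReal.toReal_div, ENNReal.toReal_ofReal hV.le, smul_eq_mul, hcdef]
          field_simp


open MeasureTheory Set Pointwise

/-- If `ε ∈ (0, r₀/2]` and `u ↦ utΓ` is injective on
`U_{2ε} = U_ε·U_ε`, then `φ_ε ∈ L²(X, μ)` and `∫_X φ_ε² dμ = 1/(m(U_ε)·V(Γ))`. -/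
theorem stmt4
    {Ginf Gf : Type*}
    [Group Ginf] [TopologicalSpace Ginf] [IsTopologicalGroup Ginf]
    [LocallyCompactSpace Ginf] [SecondCountableTopology Ginf]
    [MeasurableSpace Ginf] [BorelSpace Ginf]
    [Group Gf] [TopologicalSpace Gf] [IsTopologicalGroup Gf]
    [LocallyCompactSpace Gf] [SecondCountableTopology Gf]
    [TotallyDisconnectedSpace Gf]
    [MeasurableSpace Gf] [BorelSpace Gf]
    (minf : Measure Ginf) [Measure.IsHaarMeasure minf]
    (mf : Measure Gf) [Measure.IsHaarMeasure mf]
    (hunimod : (minf.prod mf).IsMulRightInvariant)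
    (r₀ : ℝ) (hr₀ : 0 < r₀) (d : ℝ) (hd : 0 < d)
    (p : ℝ → ℝ) (L : NNReal) (hp : LipschitzOnWith L p (Icc 0 r₀))
    (hppos : ∀ r ∈ Icc (0:ℝ) r₀, 0 < p r)
    (O : ℝ → Set Ginf)
    (hOmeas : ∀ r ∈ Ioc (0:ℝ) r₀, MeasurableSet (O r))
    (hOsymm : ∀ r ∈ Ioc (0:ℝ) r₀, (O r)⁻¹ = O r)
    (hObdd : ∀ r ∈ Ioc (0:ℝ) r₀, IsCompact (closure (O r)))
    (hOnhd : ∀ r ∈ Ioc (0:ℝ) r₀, O r ∈ nhds (1 : Ginf))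
    (hOprod : ∀ r r' : ℝ, 0 < r → 0 < r' → r + r' ≤ r₀ → O r * O r' = O (r + r'))
    (hOvol : ∀ r ∈ Ioc (0:ℝ) r₀, minf (O r) = ENNReal.ofReal (r ^ d * p r))
    -- the lattice `Γ`, of covolume `V`, and the elements `s`, `t`
    (Γ : Subgroup (Ginf × Gf)) (hΓdisc : DiscreteTopology Γ)
    (V : ℝ) (hV : 0 < V)
    (F : Set (Ginf × Gf)) (hFmeas : MeasurableSet F)
    (hFfund : ∀ g : Ginf × Gf, ∃! γ : Γ, g * (γ : Ginf × Gf) ∈ F)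
    (hFV : (minf.prod mf) F = ENNReal.ofReal V)
    (s t : Ginf × Gf)
    -- `Γ' = sΓs⁻¹`, a lattice of the same covolume `V`, with fundamental domain `F'`
    (F' : Set (Ginf × Gf)) (hF'meas : MeasurableSet F')
    (hF'fund : ∀ g : Ginf × Gf,
      ∃! γ : Subgroup.map (MulAut.conj s).toMonoidHom Γ, g * (γ : Ginf × Gf) ∈ F')
    (hF'V : (minf.prod mf) F' = ENNReal.ofReal V)
    -- `μ` is the invariant probability measure on `X = G ⧸ Γ'` induced from `m`
    (μ : Measure ((Ginf × Gf) ⧸ Subgroup.map (MulAut.conj s).toMonoidHom Γ))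
    (hμprob : IsProbabilityMeasure μ)
    (hμinv : ∀ g : Ginf × Gf, Measure.map (fun x => g • x) μ = μ)
    (hμ : ∀ A : Set ((Ginf × Gf) ⧸ Subgroup.map (MulAut.conj s).toMonoidHom Γ),
      MeasurableSet A →
        μ A = (minf.prod mf) ((QuotientGroup.mk ⁻¹' A : Set (Ginf × Gf)) ∩ F')
                / ENNReal.ofReal V)
    -- the compact open subgroup `W`
    (W : Subgroup Gf) (hWcomp : IsCompact (W : Set Gf)) (hWopen : IsOpen (W : Set Gf))
    -- the parameter `ε` and the injectivity assumption on `U_{2ε} = U_ε·U_ε`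
    (ε : ℝ) (hε0 : 0 < ε) (hεr : ε ≤ r₀ / 2)
    (hinj : Set.InjOn
      (fun u : Ginf × Gf => (QuotientGroup.mk (u * t) : (Ginf × Gf) ⧸ Γ))
      (((O ε) ×ˢ (W : Set Gf)) * ((O ε) ×ˢ (W : Set Gf)))) :
    MemLp
      (fun x : (Ginf × Gf) ⧸ Subgroup.map (MulAut.conj s).toMonoidHom Γ =>
        ∑' γ : ((fun γ : Ginf × Gf => s * γ * t⁻¹) '' (Γ : Set (Ginf × Gf))),
          Set.indicator ((O ε) ×ˢ (W : Set Gf))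
            (fun _ => (((minf.prod mf) ((O ε) ×ˢ (W : Set Gf))).toReal)⁻¹)
            (Quotient.out x * γ)) 2 μ ∧
    ∫ x, (∑' γ : ((fun γ : Ginf × Gf => s * γ * t⁻¹) '' (Γ : Set (Ginf × Gf))),
          Set.indicator ((O ε) ×ˢ (W : Set Gf))
            (fun _ => (((minf.prod mf) ((O ε) ×ˢ (W : Set Gf))).toReal)⁻¹)
            (Quotient.out x * γ)) ^ 2 ∂μ
      = ((((minf.prod mf) ((O ε) ×ˢ (W : Set Gf))).toReal) * V)⁻¹ := by
  haveI := hunimod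
  haveI := hμprob
  -- basic facts about `ε` and `U`
  have hεIoc : ε ∈ Ioc (0:ℝ) r₀ := ⟨hε0, hεr.trans (by linarith)⟩
  have hUmeas : MeasurableSet ((O ε) ×ˢ (W : Set Gf)) :=
    (hOmeas ε hεIoc).prod hWopen.measurableSet
  have h1U : (1 : Ginf × Gf) ∈ (O ε) ×ˢ (W : Set Gf) :=
    ⟨mem_of_mem_nhds (hOnhd ε hεIoc), W.one_mem⟩
  have hUsub : (O ε) ×ˢ (W : Set Gf) ⊆ ((O ε) ×ˢ (W : Set Gf)) * ((O ε) ×ˢ (W : Set Gf)) :=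
    fun u hu => ⟨1, h1U, u, hu, one_mul u⟩
  -- the measure of `U` is positive and finite
  have hmU : (minf.prod mf) ((O ε) ×ˢ (W : Set Gf)) = minf (O ε) * mf (W : Set Gf) :=
    Measure.prod_prod _ _
  have hOpos : 0 < minf (O ε) := by
    rw [hOvol ε hεIoc]
    exact ENNReal.ofReal_pos.mpr
      (mul_pos (Real.rpow_pos_of_pos hε0 d) (hppos ε ⟨hε0.le, hεIoc.2⟩))
  have hOne : minf (O ε) ≠ ⊤ := by rw [hOvol ε hεIoc]; exact ENNReal.ofReal_ne_top
  have hWpos : 0 < mf (W : Set Gf) := hWopen.measure_pos mf ⟨1, W.one_mem⟩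
  have hWne : mf (W : Set Gf) ≠ ⊤ := hWcomp.measure_lt_top.ne
  have hmU0 : (minf.prod mf) ((O ε) ×ˢ (W : Set Gf)) ≠ 0 := by
    rw [hmU]; exact (ENNReal.mul_pos hOpos.ne' hWpos.ne').ne'
  have hmUtop : (minf.prod mf) ((O ε) ×ˢ (W : Set Gf)) ≠ ⊤ := by
    rw [hmU]; exact ENNReal.mul_ne_top hOne hWne
  -- countability of the lattice
  have hΓcnt : (Γ : Set (Ginf × Gf)).Countable := by
    haveI : LindelofSpace ((Γ : Set (Ginf × Gf)) : Type _) :=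
      isLindelof_iff_LindelofSpace.mp (HereditarilyLindelof_LindelofSets _)
    haveI : DiscreteTopology ((Γ : Set (Ginf × Gf)) : Type _) := hΓdisc
    exact Set.countable_coe_iff.mp countable_of_Lindelof_of_discrete
  have hDcnt : ((fun γ : Ginf × Gf => s * γ * t⁻¹) '' (Γ : Set (Ginf × Gf))).Countable :=
    hΓcnt.image _
  haveI hΛcnt : Countable (Subgroup.map (MulAut.conj s).toMonoidHom Γ) := by
    have h1 : ((Subgroup.map (MulAut.conj s).toMonoidHom Γ : Subgroup (Ginf × Gf)) :
        Set (Ginf × Gf)).Countable := by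
      rw [Subgroup.coe_map]; exact hΓcnt.image _
    exact h1.to_subtype
  -- membership description of `Γ' = sΓs⁻¹`
  have hΛmem : ∀ x : Ginf × Gf,
      x ∈ Subgroup.map (MulAut.conj s).toMonoidHom Γ ↔ ∃ δ ∈ Γ, s * δ * s⁻¹ = x := by
    intro x
    simp [Subgroup.mem_map, MulAut.conj_apply]
  -- key uniqueness consequence of injectivity
  have huniq : ∀ h γ₁ γ₂ : Ginf × Gf,
      γ₁ ∈ (fun γ : Ginf × Gf => s * γ * t⁻¹) '' (Γ : Set (Ginf × Gf)) →
      γ₂ ∈ (fun γ : Ginf × Gf => s * γ * t⁻¹) '' (Γ : Set (Ginf × Gf)) →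
      h * γ₁ ∈ (O ε) ×ˢ (W : Set Gf) → h * γ₂ ∈ (O ε) ×ˢ (W : Set Gf) → γ₁ = γ₂ := by
    intro h γ₁ γ₂ h₁ h₂ hu₁ hu₂
    obtain ⟨δ₁, hδ₁, rfl⟩ := h₁
    obtain ⟨δ₂, hδ₂, rfl⟩ := h₂
    have hq : (QuotientGroup.mk (h * (s * δ₁ * t⁻¹) * t) : (Ginf × Gf) ⧸ Γ)
        = QuotientGroup.mk (h * (s * δ₂ * t⁻¹) * t) := by
      rw [QuotientGroup.eq]
      have heq : (h * (s * δ₁ * t⁻¹) * t)⁻¹ * (h * (s * δ₂ * t⁻¹) * t) = δ₁⁻¹ * δ₂ := by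
        group
      rw [heq]; exact mul_mem (inv_mem hδ₁) hδ₂
    exact mul_left_cancel (hinj (hUsub hu₁) (hUsub hu₂) hq)
  -- `D = sΓt⁻¹` is stable under left multiplication by `Γ'`
  have hDmul : ∀ γ' ∈ Subgroup.map (MulAut.conj s).toMonoidHom Γ,
      ∀ γ ∈ (fun γ : Ginf × Gf => s * γ * t⁻¹) '' (Γ : Set (Ginf × Gf)),
      γ' * γ ∈ (fun γ : Ginf × Gf => s * γ * t⁻¹) '' (Γ : Set (Ginf × Gf)) := by
    intro γ' hγ' γ hγ
    obtain ⟨δ', hδ', rfl⟩ := (hΛmem γ').mp hγ'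
    obtain ⟨δ, hδ, rfl⟩ := hγ
    exact ⟨δ' * δ, mul_mem hδ' hδ, by group⟩
  -- correspondence between `D` and `Γ'` through `b = s * t⁻¹`
  have hbD : ∀ γ' : Subgroup.map (MulAut.conj s).toMonoidHom Γ,
      ((γ' : Ginf × Gf))⁻¹ * (s * t⁻¹)
        ∈ (fun γ : Ginf × Gf => s * γ * t⁻¹) '' (Γ : Set (Ginf × Gf)) := by
    intro γ'
    obtain ⟨δ, hδ, hδe⟩ := (hΛmem _).mp γ'.2
    exact ⟨δ⁻¹, inv_mem hδ, by rw [← hδe]; group⟩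
  have hDb : ∀ γ ∈ (fun γ : Ginf × Gf => s * γ * t⁻¹) '' (Γ : Set (Ginf × Gf)),
      ∃ γ' : Subgroup.map (MulAut.conj s).toMonoidHom Γ,
        ((γ' : Ginf × Gf))⁻¹ * (s * t⁻¹) = γ := by
    rintro γ ⟨δ, hδ, rfl⟩
    refine ⟨⟨s * δ⁻¹ * s⁻¹, (hΛmem _).mpr ⟨δ⁻¹, inv_mem hδ, rfl⟩⟩, ?_⟩
    show (s * δ⁻¹ * s⁻¹)⁻¹ * (s * t⁻¹) = s * δ * t⁻¹
    group
  exact stmt4_aux (minf.prod mf) hunimod (Subgroup.map (MulAut.conj s).toMonoidHom Γ)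
    ((O ε) ×ˢ (W : Set Gf)) ((fun γ : Ginf × Gf => s * γ * t⁻¹) '' (Γ : Set (Ginf × Gf)))
    hUmeas hDcnt hmU0 hmUtop huniq hDmul (s * t⁻¹) hbD hDb V hV F' hF'meas hF'fund μ hμ
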